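/- Let a_1, a_2, a_3 be positive integers with gcd(a_1, a_2, a_3) = 1 such that a_1 ≡ a_2 ≡ a_3 ≡ 1 (mod 3). Then the quotient ⟨a_1, a_2, a_3⟩/3 equals the numerical semigroup generated by a_1, a_2, a_3, (2a_1 + a_2)/3, (2a_1 + a_3)/3, (2a_2 + a_1)/3, (2a_2 + a_3)/3, (2a_3 + a_1)/3, (2a_3 + a_2)/3, and (a_1 + a_2 + a_3)/3. -/

import Mathlib

set_option maxHeartbeats 1000000 in
/-- Table 1, row (p,t₁,t₂,t₃) = (3,1,1,1): for `a₁ ≡ a₂ ≡ a₃ ≡ 1 (mod 3)` with gcd 1,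
`⟨a₁,a₂,a₃⟩/3 = ⟨a₁, a₂, a₃, (2a₁+a₂)/3, (2a₁+a₃)/3, (2a₂+a₁)/3, (2a₂+a₃)/3,
(2a₃+a₁)/3, (2a₃+a₂)/3, (a₁+a₂+a₃)/3⟩`. -/
theorem quotient_three_111
    (a₁ a₂ a₃ : ℕ) (h₁ : 0 < a₁) (h₂ : 0 < a₂) (h₃ : 0 < a₃)
    (hgcd : Nat.gcd a₁ (Nat.gcd a₂ a₃) = 1)
    (hm₁ : a₁ % 3 = 1) (hm₂ : a₂ % 3 = 1) (hm₃ : a₃ % 3 = 1) :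
    {m : ℕ | 3 * m ∈ AddSubmonoid.closure ({a₁, a₂, a₃} : Set ℕ)} =
      ↑(AddSubmonoid.closure
        ({a₁, a₂, a₃, (2 * a₁ + a₂) / 3, (2 * a₁ + a₃) / 3, (2 * a₂ + a₁) / 3,
          (2 * a₂ + a₃) / 3, (2 * a₃ + a₁) / 3, (2 * a₃ + a₂) / 3,
          (a₁ + a₂ + a₃) / 3} : Set ℕ)) := by
  have d12 : 3 ∣ 2 * a₁ + a₂ := by omega
  have d13 : 3 ∣ 2 * a₁ + a₃ := by omega
  have d21 : 3 ∣ 2 * a₂ + a₁ := by omega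
  have d23 : 3 ∣ 2 * a₂ + a₃ := by omega
  have d31 : 3 ∣ 2 * a₃ + a₁ := by omega
  have d32 : 3 ∣ 2 * a₃ + a₂ := by omega
  have d123 : 3 ∣ a₁ + a₂ + a₃ := by omega
  set S : Set ℕ := {a₁, a₂, a₃} with hS
  set T : Set ℕ := {a₁, a₂, a₃, (2 * a₁ + a₂) / 3, (2 * a₁ + a₃) / 3, (2 * a₂ + a₁) / 3,
          (2 * a₂ + a₃) / 3, (2 * a₃ + a₁) / 3, (2 * a₃ + a₂) / 3,
          (a₁ + a₂ + a₃) / 3} with hT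
  have hA1 : a₁ ∈ AddSubmonoid.closure S := AddSubmonoid.subset_closure (by simp [hS])
  have hA2 : a₂ ∈ AddSubmonoid.closure S := AddSubmonoid.subset_closure (by simp [hS])
  have hA3 : a₃ ∈ AddSubmonoid.closure S := AddSubmonoid.subset_closure (by simp [hS])
  have hB12 : (2 * a₁ + a₂) / 3 ∈ AddSubmonoid.closure T := AddSubmonoid.subset_closure (by simp [hT])
  have hB13 : (2 * a₁ + a₃) / 3 ∈ AddSubmonoid.closure T := AddSubmonoid.subset_closure (by simp [hT])
  have hB21 : (2 * a₂ + a₁) / 3 ∈ AddSubmonoid.closure T := AddSubmonoid.subset_closure (by simp [hT])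
  have hB23 : (2 * a₂ + a₃) / 3 ∈ AddSubmonoid.closure T := AddSubmonoid.subset_closure (by simp [hT])
  have hB31 : (2 * a₃ + a₁) / 3 ∈ AddSubmonoid.closure T := AddSubmonoid.subset_closure (by simp [hT])
  have hB32 : (2 * a₃ + a₂) / 3 ∈ AddSubmonoid.closure T := AddSubmonoid.subset_closure (by simp [hT])
  have hB123 : (a₁ + a₂ + a₃) / 3 ∈ AddSubmonoid.closure T := AddSubmonoid.subset_closure (by simp [hT])
  have hC1 : a₁ ∈ AddSubmonoid.closure T := AddSubmonoid.subset_closure (by simp [hT])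
  have hC2 : a₂ ∈ AddSubmonoid.closure T := AddSubmonoid.subset_closure (by simp [hT])
  have hC3 : a₃ ∈ AddSubmonoid.closure T := AddSubmonoid.subset_closure (by simp [hT])
  have key : ∀ n x y z : ℕ, x + y + z ≤ n → (x + y + z) % 3 = 0 →
      ∃ s ∈ AddSubmonoid.closure T, 3 * s = x * a₁ + y * a₂ + z * a₃ := by
    intro n
    induction n using Nat.strong_induction_on with
    | _ n ih =>
      intro x y z hle hmod
      by_cases hx : 3 ≤ x
      · obtain ⟨x', rfl⟩ : ∃ x', x = x' + 3 := ⟨x - 3, by omega⟩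
        obtain ⟨s, hs, hs3⟩ := ih (n - 1) (by omega) x' y z (by omega) (by omega)
        refine ⟨a₁ + s, add_mem hC1 hs, ?_⟩
        have h' : (x' + 3) * a₁ = x' * a₁ + 3 * a₁ := by ring
        omega
      by_cases hy : 3 ≤ y
      · obtain ⟨y', rfl⟩ : ∃ y', y = y' + 3 := ⟨y - 3, by omega⟩
        obtain ⟨s, hs, hs3⟩ := ih (n - 1) (by omega) x y' z (by omega) (by omega)
        refine ⟨a₂ + s, add_mem hC2 hs, ?_⟩
        have h' : (y' + 3) * a₂ = y' * a₂ + 3 * a₂ := by ring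
        omega
      by_cases hz : 3 ≤ z
      · obtain ⟨z', rfl⟩ : ∃ z', z = z' + 3 := ⟨z - 3, by omega⟩
        obtain ⟨s, hs, hs3⟩ := ih (n - 1) (by omega) x y z' (by omega) (by omega)
        refine ⟨a₃ + s, add_mem hC3 hs, ?_⟩
        have h' : (z' + 3) * a₃ = z' * a₃ + 3 * a₃ := by ring
        omega
      · push_neg at hx hy hz
        interval_cases x <;> interval_cases y <;> interval_cases z <;>
        first
        | omega
        | (refine ⟨0, zero_mem _, ?_⟩; ring1)
        | (refine ⟨_, hB12, ?_⟩; rw [Nat.mul_div_cancel' d12]; ring1)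
        | (refine ⟨_, hB13, ?_⟩; rw [Nat.mul_div_cancel' d13]; ring1)
        | (refine ⟨_, hB21, ?_⟩; rw [Nat.mul_div_cancel' d21]; ring1)
        | (refine ⟨_, hB23, ?_⟩; rw [Nat.mul_div_cancel' d23]; ring1)
        | (refine ⟨_, hB31, ?_⟩; rw [Nat.mul_div_cancel' d31]; ring1)
        | (refine ⟨_, hB32, ?_⟩; rw [Nat.mul_div_cancel' d32]; ring1)
        | (refine ⟨_, hB123, ?_⟩; rw [Nat.mul_div_cancel' d123]; ring1)
        | (refine ⟨_, add_mem hB12 hB32, ?_⟩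
           rw [Nat.mul_add, Nat.mul_div_cancel' d12, Nat.mul_div_cancel' d32]; ring1)
  apply Set.eq_of_subset_of_subset
  · intro m hm
    simp only [Set.mem_setOf_eq] at hm
    obtain ⟨x, y, z, hxyz⟩ : ∃ x y z : ℕ, x * a₁ + y * a₂ + z * a₃ = 3 * m := by
      refine AddSubmonoid.closure_induction (motive := fun w _ => ∃ x y z : ℕ,
        x * a₁ + y * a₂ + z * a₃ = w) ?_ ?_ ?_ hm
      · intro g hg
        simp only [hS, Set.mem_insert_iff, Set.mem_singleton_iff] at hg
        rcases hg with rfl | rfl | rfl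
        · exact ⟨1, 0, 0, by ring⟩
        · exact ⟨0, 1, 0, by ring⟩
        · exact ⟨0, 0, 1, by ring⟩
      · exact ⟨0, 0, 0, by ring⟩
      · rintro p q _ _ ⟨x1, y1, z1, h1⟩ ⟨x2, y2, z2, h2⟩
        exact ⟨x1 + x2, y1 + y2, z1 + z2, by rw [← h1, ← h2]; ring⟩
    obtain ⟨k₁, hk₁⟩ : ∃ k, a₁ = 3 * k + 1 := ⟨a₁ / 3, by omega⟩
    obtain ⟨k₂, hk₂⟩ : ∃ k, a₂ = 3 * k + 1 := ⟨a₂ / 3, by omega⟩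
    obtain ⟨k₃, hk₃⟩ : ∃ k, a₃ = 3 * k + 1 := ⟨a₃ / 3, by omega⟩
    have e1 : x * a₁ = 3 * (x * k₁) + x := by rw [hk₁]; ring
    have e2 : y * a₂ = 3 * (y * k₂) + y := by rw [hk₂]; ring
    have e3 : z * a₃ = 3 * (z * k₃) + z := by rw [hk₃]; ring
    have hmod : (x + y + z) % 3 = 0 := by omega
    obtain ⟨s, hs, hs3⟩ := key (x + y + z) x y z le_rfl hmod
    have : s = m := by omega
    exact this ▸ hs
  · intro m hm
    simp only [Set.mem_setOf_eq]
    refine AddSubmonoid.closure_induction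
      (motive := fun w _ => 3 * w ∈ AddSubmonoid.closure S) ?_ ?_ ?_ hm
    · intro g hg
      simp only [hT, Set.mem_insert_iff, Set.mem_singleton_iff] at hg
      rcases hg with h | h | h | h | h | h | h | h | h | h <;> rw [h]
      · have : 3 * a₁ = a₁ + (a₁ + a₁) := by ring
        rw [this]; exact add_mem hA1 (add_mem hA1 hA1)
      · have : 3 * a₂ = a₂ + (a₂ + a₂) := by ring
        rw [this]; exact add_mem hA2 (add_mem hA2 hA2)
      · have : 3 * a₃ = a₃ + (a₃ + a₃) := by ring
        rw [this]; exact add_mem hA3 (add_mem hA3 hA3)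
      · rw [Nat.mul_div_cancel' d12]
        have : 2 * a₁ + a₂ = a₁ + (a₁ + a₂) := by ring
        rw [this]; exact add_mem hA1 (add_mem hA1 hA2)
      · rw [Nat.mul_div_cancel' d13]
        have : 2 * a₁ + a₃ = a₁ + (a₁ + a₃) := by ring
        rw [this]; exact add_mem hA1 (add_mem hA1 hA3)
      · rw [Nat.mul_div_cancel' d21]
        have : 2 * a₂ + a₁ = a₂ + (a₂ + a₁) := by ring
        rw [this]; exact add_mem hA2 (add_mem hA2 hA1)
      · rw [Nat.mul_div_cancel' d23]
        have : 2 * a₂ + a₃ = a₂ + (a₂ + a₃) := by ring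
        rw [this]; exact add_mem hA2 (add_mem hA2 hA3)
      · rw [Nat.mul_div_cancel' d31]
        have : 2 * a₃ + a₁ = a₃ + (a₃ + a₁) := by ring
        rw [this]; exact add_mem hA3 (add_mem hA3 hA1)
      · rw [Nat.mul_div_cancel' d32]
        have : 2 * a₃ + a₂ = a₃ + (a₃ + a₂) := by ring
        rw [this]; exact add_mem hA3 (add_mem hA3 hA2)
      · rw [Nat.mul_div_cancel' d123]
        exact add_mem (add_mem hA1 hA2) hA3
    · simpa using zero_mem (AddSubmonoid.closure S)
    · intro p q _ _ hp hq
      have : 3 * (p + q) = 3 * p + 3 * q := by ring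
      rw [this]; exact add_mem hp hq
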